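/- Let h₁, h₂ : (0,∞) → ℝ be convex, bounded, decreasing functions with lim_{x→0⁺} h₁(x) = lim_{x→0⁺} h₂(x). Let I ≠ (0,∞) be a connected component of the open set X := {x : h₁(x) < h₂(x)}. Then I contains a point of supp(h₁), where supp(h) := {x ∈ (0,∞) : h is not affine on any open neighbourhood of x}. -/

import Mathlib

open Set Filter Topology

/-- The "support" of `h` within `(0,∞)`: points with no open neighbourhood
`U ⊆ (0,∞)` on which `h` is affine. -/
def suppC (h : ℝ → ℝ) : Set ℝ :=
  {x : ℝ | x ∈ Set.Ioi 0 ∧ ∀ U : Set ℝ, IsOpen U → x ∈ U → U ⊆ Set.Ioi 0 →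
    ¬ ∃ m c : ℝ, ∀ y ∈ U, h y = m * y + c}

lemma affine_coeffs_eq {V : Set ℝ} (hV : IsOpen V) {y m c m' c' : ℝ} (hy : y ∈ V)
    (h : ∀ z ∈ V, m * z + c = m' * z + c') : m = m' ∧ c = c' := by
  obtain ⟨ε, hε, hball⟩ := Metric.isOpen_iff.1 hV y hy
  have hmem : y + ε / 2 ∈ V := by
    apply hball
    rw [Metric.mem_ball, Real.dist_eq]
    rw [show y + ε / 2 - y = ε / 2 by ring, abs_of_pos (by linarith)]
    linarith
  have h1 := h y hy
  have h2 := h (y + ε / 2) hmem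
  have hmm : m * (ε / 2) = m' * (ε / 2) := by linarith
  have hm : m = m' := mul_right_cancel₀ (by positivity) hmm
  exact ⟨hm, by rw [hm] at h1; linarith⟩

/-- For convex, bounded, decreasing `h₁, h₂` on `(0,∞)` with equal limits at `0⁺`,
every connected component `I ≠ (0,∞)` of `{x : h₁ x < h₂ x}` meets `supp h₁`. -/
theorem stmt12 (h₁ h₂ : ℝ → ℝ)
    (hc₁ : ConvexOn ℝ (Set.Ioi 0) h₁) (hc₂ : ConvexOn ℝ (Set.Ioi 0) h₂)
    (hb : ∃ C : ℝ, ∀ x ∈ Set.Ioi (0 : ℝ), |h₁ x| ≤ C ∧ |h₂ x| ≤ C)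
    (hm₁ : AntitoneOn h₁ (Set.Ioi 0)) (hm₂ : AntitoneOn h₂ (Set.Ioi 0))
    (hlim : ∃ l : ℝ, Tendsto h₁ (nhdsWithin 0 (Set.Ioi 0)) (nhds l) ∧
      Tendsto h₂ (nhdsWithin 0 (Set.Ioi 0)) (nhds l))
    (x₀ : ℝ) (hx₀ : x₀ ∈ {x : ℝ | x ∈ Set.Ioi 0 ∧ h₁ x < h₂ x})
    (I : Set ℝ) (hI : I = connectedComponentIn {x : ℝ | x ∈ Set.Ioi 0 ∧ h₁ x < h₂ x} x₀)
    (hIne : I ≠ Set.Ioi 0) :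
    (I ∩ suppC h₁).Nonempty := by
  classical
  obtain ⟨C, hC⟩ := hb
  obtain ⟨l, hl₁, hl₂⟩ := hlim
  set X : Set ℝ := {x : ℝ | x ∈ Set.Ioi 0 ∧ h₁ x < h₂ x} with hX
  have hx₀X : x₀ ∈ X := hx₀
  have hx₀pos : (0:ℝ) < x₀ := hx₀.1
  have hx₀lt : h₁ x₀ < h₂ x₀ := hx₀.2
  have hcont₁ : ContinuousOn h₁ (Set.Ioi 0) := hc₁.continuousOn isOpen_Ioi
  have hcont₂ : ContinuousOn h₂ (Set.Ioi 0) := hc₂.continuousOn isOpen_Ioi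
  have hXopen : IsOpen X := by
    have hXeq : X = Set.Ioi 0 ∩ (fun x => h₂ x - h₁ x) ⁻¹' Set.Ioi 0 := by
      ext x
      simp only [hX, Set.mem_setOf_eq, Set.mem_inter_iff, Set.mem_preimage, Set.mem_Ioi, sub_pos]
    rw [hXeq]
    exact (hcont₂.sub hcont₁).isOpen_inter_preimage isOpen_Ioi isOpen_Ioi
  have hIopen : IsOpen I := by rw [hI]; exact hXopen.connectedComponentIn
  have hIconn : IsPreconnected I := by rw [hI]; exact isPreconnected_connectedComponentIn
  have hIsub : I ⊆ X := by rw [hI]; exact connectedComponentIn_subset _ _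
  have hx₀I : x₀ ∈ I := by rw [hI]; exact mem_connectedComponentIn hx₀X
  have hIsub' : I ⊆ Set.Ioi 0 := fun x hx => (hIsub hx).1
  -- boundary points of I inside (0,∞) are not in X
  have hbound : ∀ p : ℝ, p ∉ I → p ∈ closure I → 0 < p → h₂ p ≤ h₁ p := by
    intro p hpI hpcl hppos
    by_contra hlt
    push_neg at hlt
    have hpX : p ∈ X := ⟨hppos, hlt⟩
    obtain ⟨ε, hε, hball⟩ := Metric.isOpen_iff.1 hXopen p hpX
    obtain ⟨z, hzI, hz⟩ := Metric.mem_closure_iff.1 hpcl ε hε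
    have hzball : z ∈ Metric.ball p ε := by rwa [Metric.mem_ball, dist_comm]
    have hconn : IsPreconnected (I ∪ Metric.ball p ε) :=
      IsPreconnected.union z hzI hzball hIconn (convex_ball p ε).isPreconnected
    have hsub : I ∪ Metric.ball p ε ⊆ connectedComponentIn X x₀ :=
      hconn.subset_connectedComponentIn (Or.inl hx₀I) (Set.union_subset hIsub hball)
    rw [← hI] at hsub
    exact hpI (hsub (Or.inr (Metric.mem_ball_self hε)))
  by_contra hne
  rw [Set.not_nonempty_iff_eq_empty] at hne
  have hloc : ∀ x ∈ I, ∃ U : Set ℝ, IsOpen U ∧ x ∈ U ∧ U ⊆ Set.Ioi 0 ∧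
      ∃ m c : ℝ, ∀ y ∈ U, h₁ y = m * y + c := by
    intro x hxI
    have hxs : x ∉ suppC h₁ := fun hs =>
      (Set.eq_empty_iff_forall_notMem.mp hne x ⟨hxI, hs⟩)
    unfold suppC at hxs
    simp only [Set.mem_setOf_eq, not_and, not_forall, not_not] at hxs
    obtain ⟨U, hUo, hxU, hUsub, hmc⟩ := hxs (hIsub' hxI)
    exact ⟨U, hUo, hxU, hUsub, hmc⟩
  obtain ⟨U₀, hU₀o, hx₀U₀, hU₀sub, m, c, hU₀aff⟩ := hloc x₀ hx₀I
  -- gluing: h₁ is affine with coefficients m, c on all of I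
  set u : Set ℝ := {x | ∃ V : Set ℝ, IsOpen V ∧ x ∈ V ∧ ∀ y ∈ V, h₁ y = m * y + c} with hu
  have huopen : IsOpen u := by
    rw [isOpen_iff_mem_nhds]
    rintro x ⟨V, hVo, hxV, hVaff⟩
    exact Filter.mem_of_superset (hVo.mem_nhds hxV) fun y hy => ⟨V, hVo, hy, hVaff⟩
  set v : Set ℝ := {x | ∃ V : Set ℝ, IsOpen V ∧ x ∈ V ∧ Disjoint V u} with hv
  have hvopen : IsOpen v := by
    rw [isOpen_iff_mem_nhds]
    rintro x ⟨V, hVo, hxV, hVd⟩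
    exact Filter.mem_of_superset (hVo.mem_nhds hxV) fun y hy => ⟨V, hVo, hy, hVd⟩
  have hdisj : Disjoint u v := by
    rw [Set.disjoint_left]
    rintro x hxu ⟨V, hVo, hxV, hVd⟩
    exact (Set.disjoint_left.mp hVd hxV) hxu
  have hcover : I ⊆ u ∪ v := by
    intro x hxI
    obtain ⟨U, hUo, hxU, hUsub, m', c', hUaff⟩ := hloc x hxI
    rcases Set.eq_empty_or_nonempty (U ∩ u) with hUu | ⟨y, hyU, hyu⟩
    · exact Or.inr ⟨U, hUo, hxU, Set.disjoint_iff_inter_eq_empty.mpr hUu⟩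
    · left
      obtain ⟨V, hVo, hyV, hVaff⟩ := hyu
      have hco : m' = m ∧ c' = c := by
        refine affine_coeffs_eq (hUo.inter hVo) ⟨hyU, hyV⟩ fun z hz => ?_
        rw [← hUaff z hz.1, hVaff z hz.2]
      exact ⟨U, hUo, hxU, fun y hy => by rw [hUaff y hy, hco.1, hco.2]⟩
  have hIu : I ⊆ u :=
    hIconn.subset_left_of_subset_union huopen hvopen hdisj hcover
      ⟨x₀, hx₀I, U₀, hU₀o, hx₀U₀, hU₀aff⟩
  have haff : ∀ x ∈ I, h₁ x = m * x + c := by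
    intro x hx
    obtain ⟨V, _, hxV, hVaff⟩ := hIu hx
    exact hVaff x hxV
  -- inf of I
  have hbdd : BddBelow I := ⟨0, fun x hx => (hIsub' hx).le⟩
  have hIne' : I.Nonempty := ⟨x₀, hx₀I⟩
  set a := sInf I with ha
  have ha0 : 0 ≤ a := le_csInf hIne' fun x hx => (hIsub' hx).le
  have hax₀ : a ≤ x₀ := csInf_le hbdd hx₀I
  have haI : a ∉ I := by
    intro haI
    obtain ⟨ε, hε, hball⟩ := Metric.isOpen_iff.1 hIopen a haI
    have hmem : a - ε / 2 ∈ I := by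
      apply hball
      rw [Metric.mem_ball, Real.dist_eq,
        show a - ε / 2 - a = -(ε / 2) by ring, abs_neg, abs_of_pos (by linarith)]
      linarith
    linarith [csInf_le hbdd hmem]
  have hax₀' : a < x₀ := lt_of_le_of_ne hax₀ fun h => haI (h ▸ hx₀I)
  have hfill_lo : ∀ y, a < y → y ≤ x₀ → y ∈ I := by
    intro y hay hyx
    obtain ⟨z, hzI, hzy⟩ := exists_lt_of_csInf_lt hIne' hay
    exact hIconn.Icc_subset hzI hx₀I ⟨hzy.le, hyx⟩
  have hCnn : (0:ℝ) ≤ C := le_trans (abs_nonneg _) (hC x₀ hx₀pos).1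
  by_cases hbdda : BddAbove I
  · -- Case B : bounded above
    set b := sSup I with hbdef
    have hx₀b : x₀ ≤ b := le_csSup hbdda hx₀I
    have hbI : b ∉ I := by
      intro hbI
      obtain ⟨ε, hε, hball⟩ := Metric.isOpen_iff.1 hIopen b hbI
      have hmem : b + ε / 2 ∈ I := by
        apply hball
        rw [Metric.mem_ball, Real.dist_eq,
          show b + ε / 2 - b = ε / 2 by ring, abs_of_pos (by linarith)]
        linarith
      linarith [le_csSup hbdda hmem]
    have hx₀b' : x₀ < b := lt_of_le_of_ne hx₀b fun h => hbI (h ▸ hx₀I)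
    have hbpos : 0 < b := lt_trans hx₀pos hx₀b'
    have hfill_hi : ∀ y, x₀ ≤ y → y < b → y ∈ I := by
      intro y h1 h2
      obtain ⟨z, hzI, hz⟩ := exists_lt_of_lt_csSup hIne' h2
      exact hIconn.Icc_subset hx₀I hzI ⟨h1, hz.le⟩
    have hbcl : b ∈ closure I := csSup_mem_closure hIne' hbdda
    have hb2 : h₂ b ≤ h₁ b := hbound b hbI hbcl hbpos
    have h₁b : h₁ b = m * b + c := by
      haveI : (𝓝[Set.Ioo x₀ b] b).NeBot := by
        apply mem_closure_iff_nhdsWithin_neBot.mp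
        rw [closure_Ioo hx₀b'.ne]
        exact ⟨hx₀b'.le, le_rfl⟩
      have htd : Tendsto h₁ (𝓝[Set.Ioo x₀ b] b) (𝓝 (h₁ b)) :=
        (hcont₁ b hbpos).mono_left
          (nhdsWithin_mono _ fun y hy => lt_trans hx₀pos hy.1)
      have htd2 : Tendsto (fun y : ℝ => m * y + c) (𝓝[Set.Ioo x₀ b] b) (𝓝 (m * b + c)) :=
        (((continuous_const.mul continuous_id).add continuous_const).tendsto b).mono_left
          nhdsWithin_le_nhds
      have hev : h₁ =ᶠ[𝓝[Set.Ioo x₀ b] b] fun y => m * y + c := by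
        filter_upwards [self_mem_nhdsWithin] with y hy
        exact haff y (hfill_hi y hy.1.le hy.2)
      exact tendsto_nhds_unique htd (htd2.congr' hev.symm)
    have hb2' : h₂ b ≤ m * b + c := h₁b ▸ hb2
    have h₁x₀ : h₁ x₀ = m * x₀ + c := haff x₀ hx₀I
    rcases ha0.lt_or_eq with hapos | ha0eq
    · -- 0 < a
      have hacl : a ∈ closure I := csInf_mem_closure hIne' hbdd
      have ha2 : h₂ a ≤ h₁ a := hbound a haI hacl hapos
      have h₁a : h₁ a = m * a + c := by
        haveI : (𝓝[Set.Ioo a x₀] a).NeBot := by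
          apply mem_closure_iff_nhdsWithin_neBot.mp
          rw [closure_Ioo hax₀'.ne]
          exact ⟨le_rfl, hax₀'.le⟩
        have htd : Tendsto h₁ (𝓝[Set.Ioo a x₀] a) (𝓝 (h₁ a)) :=
          (hcont₁ a hapos).mono_left
            (nhdsWithin_mono _ fun y hy => lt_trans hapos hy.1)
        have htd2 : Tendsto (fun y : ℝ => m * y + c) (𝓝[Set.Ioo a x₀] a) (𝓝 (m * a + c)) :=
          (((continuous_const.mul continuous_id).add continuous_const).tendsto a).mono_left
            nhdsWithin_le_nhds
        have hev : h₁ =ᶠ[𝓝[Set.Ioo a x₀] a] fun y => m * y + c := by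
          filter_upwards [self_mem_nhdsWithin] with y hy
          exact haff y (hfill_lo y hy.1 hy.2.le)
        exact tendsto_nhds_unique htd (htd2.congr' hev.symm)
      have ha2' : h₂ a ≤ m * a + c := h₁a ▸ ha2
      have hab : a < b := lt_trans hax₀' hx₀b'
      have hba : (0:ℝ) < b - a := by linarith
      have hlnn : 0 ≤ (b - x₀) / (b - a) := div_nonneg (by linarith) hba.le
      have hmnn : 0 ≤ (x₀ - a) / (b - a) := div_nonneg (by linarith) hba.le
      have hsum : (b - x₀) / (b - a) + (x₀ - a) / (b - a) = 1 := by
        field_simp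
        ring
      have hconv := hc₂.2 (Set.mem_Ioi.mpr hapos) (Set.mem_Ioi.mpr hbpos) hlnn hmnn hsum
      rw [smul_eq_mul, smul_eq_mul, smul_eq_mul, smul_eq_mul] at hconv
      have hxeq : (b - x₀) / (b - a) * a + (x₀ - a) / (b - a) * b = x₀ := by
        field_simp
        ring
      rw [hxeq] at hconv
      have hmix : (b - x₀) / (b - a) * h₂ a + (x₀ - a) / (b - a) * h₂ b ≤
          (b - x₀) / (b - a) * (m * a + c) + (x₀ - a) / (b - a) * (m * b + c) := by
        gcongr
      have hfin : (b - x₀) / (b - a) * (m * a + c) + (x₀ - a) / (b - a) * (m * b + c)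
          = m * x₀ + c := by
        field_simp
        ring
      linarith
    · -- a = 0
      have hfill0 : ∀ y, 0 < y → y < b → y ∈ I := by
        intro y h1 h2
        rcases le_or_gt y x₀ with h | h
        · exact hfill_lo y (by rw [← ha0eq]; exact h1) h
        · exact hfill_hi y h.le h2
      have hlc : l = c := by
        have htd2 : Tendsto (fun y : ℝ => m * y + c) (𝓝[>] (0:ℝ)) (𝓝 c) := by
          have h0 : Tendsto (fun y : ℝ => m * y + c) (𝓝 (0:ℝ)) (𝓝 (m * 0 + c)) :=
            ((continuous_const.mul continuous_id).add continuous_const).tendsto 0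
          rw [show m * 0 + c = c by ring] at h0
          exact h0.mono_left nhdsWithin_le_nhds
        have hev : h₁ =ᶠ[𝓝[>] (0:ℝ)] fun y => m * y + c := by
          filter_upwards [Ioo_mem_nhdsGT hx₀pos] with y hy
          exact haff y (hfill0 y hy.1 (lt_trans hy.2 hx₀b'))
        exact tendsto_nhds_unique hl₁ (htd2.congr' hev.symm)
      have hchord : ∀ ε : ℝ, 0 < ε → ε < x₀ →
          h₂ x₀ ≤ (b - x₀) / (b - ε) * h₂ ε + (x₀ - ε) / (b - ε) * h₂ b := by
        intro ε h1 h2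
        have hεb : ε < b := lt_trans h2 hx₀b'
        have hbε : (0:ℝ) < b - ε := by linarith
        have hlnn : 0 ≤ (b - x₀) / (b - ε) := div_nonneg (by linarith) hbε.le
        have hmnn : 0 ≤ (x₀ - ε) / (b - ε) := div_nonneg (by linarith) hbε.le
        have hsum : (b - x₀) / (b - ε) + (x₀ - ε) / (b - ε) = 1 := by
          field_simp
          ring
        have hconv := hc₂.2 (Set.mem_Ioi.mpr h1) (Set.mem_Ioi.mpr hbpos) hlnn hmnn hsum
        rw [smul_eq_mul, smul_eq_mul, smul_eq_mul, smul_eq_mul] at hconv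
        have hxeq : (b - x₀) / (b - ε) * ε + (x₀ - ε) / (b - ε) * b = x₀ := by
          field_simp
          ring
        rwa [hxeq] at hconv
      have hT : Tendsto (fun ε : ℝ => (b - x₀) / (b - ε) * h₂ ε + (x₀ - ε) / (b - ε) * h₂ b)
          (𝓝[>] (0:ℝ)) (𝓝 ((b - x₀) / b * l + x₀ / b * h₂ b)) := by
        have t1 : Tendsto (fun ε : ℝ => (b - x₀) / (b - ε)) (𝓝[>] (0:ℝ)) (𝓝 ((b - x₀) / b)) := by
          have hca : ContinuousAt (fun ε : ℝ => (b - x₀) / (b - ε)) 0 := by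
            apply ContinuousAt.div continuousAt_const (continuousAt_const.sub continuousAt_id)
            simpa using hbpos.ne'
          have := hca.tendsto.mono_left (nhdsWithin_le_nhds (s := Set.Ioi (0:ℝ)))
          simpa using this
        have t2 : Tendsto (fun ε : ℝ => (x₀ - ε) / (b - ε)) (𝓝[>] (0:ℝ)) (𝓝 (x₀ / b)) := by
          have hca : ContinuousAt (fun ε : ℝ => (x₀ - ε) / (b - ε)) 0 := by
            apply ContinuousAt.div (continuousAt_const.sub continuousAt_id)
              (continuousAt_const.sub continuousAt_id)
            simpa using hbpos.ne'
          have := hca.tendsto.mono_left (nhdsWithin_le_nhds (s := Set.Ioi (0:ℝ)))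
          simpa using this
        exact (t1.mul hl₂).add (t2.mul tendsto_const_nhds)
      have hle : h₂ x₀ ≤ (b - x₀) / b * l + x₀ / b * h₂ b := by
        apply ge_of_tendsto hT
        filter_upwards [Ioo_mem_nhdsGT hx₀pos] with ε hε
        exact hchord ε hε.1 hε.2
      have hstep : (b - x₀) / b * l + x₀ / b * h₂ b ≤
          (b - x₀) / b * c + x₀ / b * (m * b + c) := by
        rw [hlc]
        have hnn : 0 ≤ x₀ / b := by positivity
        nlinarith [mul_le_mul_of_nonneg_left hb2' hnn]
      have heqf : (b - x₀) / b * c + x₀ / b * (m * b + c) = m * x₀ + c := by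
        field_simp
        ring
      linarith
  · -- Case A : unbounded above
    have hfill_hi : ∀ y, x₀ ≤ y → y ∈ I := by
      intro y hy
      obtain ⟨z, hzI, hyz⟩ := not_bddAbove_iff.mp hbdda y
      exact hIconn.Icc_subset hx₀I hzI ⟨hy, hyz.le⟩
    have hm0 : m = 0 := by
      by_contra hm
      have hmpos : 0 < |m| := abs_pos.mpr hm
      obtain ⟨x, hx1, hx2⟩ : ∃ x : ℝ, x₀ ≤ x ∧ (2 * C + |c| + 1) / |m| ≤ x :=
        ⟨max x₀ ((2 * C + |c| + 1) / |m|), le_max_left _ _, le_max_right _ _⟩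
      have hxI : x ∈ I := hfill_hi x hx1
      have hbb := (hC x (hIsub' hxI)).1
      rw [haff x hxI] at hbb
      have hxpos : 0 < x := lt_of_lt_of_le hx₀pos hx1
      have h1 : 2 * C + |c| + 1 ≤ |m| * x := by
        have h := (div_le_iff₀ hmpos).mp hx2
        nlinarith [mul_comm x |m|]
      have h3 : |m| * x - |c| ≤ |m * x + c| := by
        have habs : |m * x| ≤ |m * x + c| + |c| := by
          calc |m * x| = |m * x + c + -c| := by congr 1; ring
          _ ≤ |m * x + c| + |(-c)| := abs_add_le _ _
          _ = |m * x + c| + |c| := by rw [abs_neg]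
        rw [abs_mul, abs_of_pos hxpos] at habs
        linarith
      linarith
    have hapos : 0 < a := by
      rcases ha0.lt_or_eq with h | h
      · exact h
      · exfalso
        apply hIne
        ext y
        constructor
        · exact fun hy => hIsub' hy
        · intro hy
          rcases le_or_gt y x₀ with h' | h'
          · exact hfill_lo y (by rw [← h]; exact hy) h'
          · exact hfill_hi y h'.le
    have hacl : a ∈ closure I := csInf_mem_closure hIne' hbdd
    have ha2 : h₂ a ≤ h₁ a := hbound a haI hacl hapos
    have h₁a : h₁ a = c := by
      haveI : (𝓝[Set.Ioo a x₀] a).NeBot := by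
        apply mem_closure_iff_nhdsWithin_neBot.mp
        rw [closure_Ioo hax₀'.ne]
        exact ⟨le_rfl, hax₀'.le⟩
      have htd : Tendsto h₁ (𝓝[Set.Ioo a x₀] a) (𝓝 (h₁ a)) :=
        (hcont₁ a hapos).mono_left
          (nhdsWithin_mono _ fun y hy => lt_trans hapos hy.1)
      have htd2 : Tendsto (fun _ : ℝ => c) (𝓝[Set.Ioo a x₀] a) (𝓝 c) := tendsto_const_nhds
      have hev : h₁ =ᶠ[𝓝[Set.Ioo a x₀] a] fun _ => c := by
        filter_upwards [self_mem_nhdsWithin] with y hy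
        rw [haff y (hfill_lo y hy.1 hy.2.le), hm0]; ring
      exact tendsto_nhds_unique htd (htd2.congr' hev.symm)
    have hfin : h₂ x₀ ≤ h₂ a := hm₂ (Set.mem_Ioi.mpr hapos) hx₀.1 hax₀'.le
    have h₁x₀ : h₁ x₀ = c := by rw [haff x₀ hx₀I, hm0]; ring
    linarith
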